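/- Let A, B be nonempty closed convex subsets of a uniformly convex Banach space X, and T a p-cyclic φ-contraction mapping. Let (x₀,y₀) ∈ A × B, x_n = T(x_{n-1}, y_{n-1}), y_n = T(y_{n-1}, x_{n-1}). Then {(x_{2n}, y_{2n})} is a Cauchy sequence in A × B and {(x_{2n+1}, y_{2n+1})} is a Cauchy sequence in B × A. -/
import Mathlib

open Filter Topology



/-- Eldred–Veeramani convexity lemma, scalar form. -/
lemma conv_lemma {X : Type*} [NormedAddCommGroup X] [NormedSpace ℝ X] [UniformConvexSpace X]
    (A B : Set X) (hAconv : Convex ℝ A) (d : ℝ) (hd0 : 0 ≤ d)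
    (hdist : ∀ a ∈ A, ∀ b ∈ B, d ≤ ‖a - b‖)
    {ε : ℝ} (hε : 0 < ε) :
    ∃ δ > (0:ℝ), ∀ p ∈ A, ∀ q ∈ A, ∀ r ∈ B,
      ‖p - r‖ ≤ d + δ → ‖q - r‖ ≤ d + δ → ‖p - q‖ ≤ ε := by
  rcases eq_or_lt_of_le hd0 with hd | hd
  · -- d = 0 case
    refine ⟨ε / 2, by positivity, fun p hp q hq r hr h1 h2 => ?_⟩
    calc ‖p - q‖ ≤ ‖p - r‖ + ‖r - q‖ := norm_sub_le_norm_sub_add_norm_sub _ _ _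
    _ = ‖p - r‖ + ‖q - r‖ := by rw [norm_sub_rev r q]
    _ ≤ (d + ε/2) + (d + ε/2) := add_le_add h1 h2
    _ = ε := by rw [← hd]; ring
  · -- d > 0 case, use uniform convexity
    have hε1 : (0:ℝ) < ε / (d + 1) := by positivity
    obtain ⟨δ₁, hδ₁, huc⟩ := exists_forall_closed_ball_dist_add_le_two_sub X hε1
    set δ₀ := min 1 (d * δ₁ / 4) with hδ₀def
    have hδ₀ : 0 < δ₀ := lt_min one_pos (by positivity)
    refine ⟨δ₀, hδ₀, fun p hp q hq r hr h1 h2 => ?_⟩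
    by_contra hcon
    push_neg at hcon
    set R := d + δ₀ with hRdef
    have hR : 0 < R := by positivity
    have hv1 : ‖R⁻¹ • (p - r)‖ ≤ 1 := by
      rw [norm_smul, Real.norm_eq_abs, abs_of_pos (inv_pos.2 hR)]
      rw [inv_mul_le_iff₀ hR, mul_one]; exact h1
    have hv2 : ‖R⁻¹ • (q - r)‖ ≤ 1 := by
      rw [norm_smul, Real.norm_eq_abs, abs_of_pos (inv_pos.2 hR)]
      rw [inv_mul_le_iff₀ hR, mul_one]; exact h2
    have hsep : ε / (d + 1) ≤ ‖R⁻¹ • (p - r) - R⁻¹ • (q - r)‖ := by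
      rw [← smul_sub, norm_smul, Real.norm_eq_abs, abs_of_pos (inv_pos.2 hR)]
      have : p - r - (q - r) = p - q := by abel
      rw [this]
      rw [div_le_iff₀ (by positivity), inv_mul_eq_div, div_mul_eq_mul_div,
        le_div_iff₀ hR]
      have hRd1 : R ≤ d + 1 := by
        simp only [hRdef]
        have : δ₀ ≤ 1 := min_le_left _ _
        linarith
      nlinarith [hcon.le, norm_nonneg (p - q)]
    have hmid := huc hv1 hv2 hsep
    -- midpoint in A
    have hmidA : (1/2 : ℝ) • p + (1/2 : ℝ) • q ∈ A :=
      hAconv hp hq (by norm_num) (by norm_num) (by norm_num)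
    have hlow := hdist _ hmidA r hr
    have heq : (1/2 : ℝ) • p + (1/2 : ℝ) • q - r
        = (R / 2) • (R⁻¹ • (p - r) + R⁻¹ • (q - r)) := by
      rw [smul_add, smul_smul, smul_smul]
      rw [div_mul_eq_mul_div, mul_inv_cancel₀ hR.ne']
      module
    have : ‖(1/2 : ℝ) • p + (1/2 : ℝ) • q - r‖ ≤ (R / 2) * (2 - δ₁) := by
      rw [heq, norm_smul, Real.norm_eq_abs, abs_of_pos (by positivity : (0:ℝ) < R / 2)]
      exact mul_le_mul_of_nonneg_left hmid (by positivity)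
    have hfin : d ≤ (R / 2) * (2 - δ₁) := le_trans hlow this
    have hδ₀le : δ₀ ≤ d * δ₁ / 4 := min_le_right _ _
    nlinarith [hδ₀]



lemma abstract_cauchy {Y : Type*} [NormedAddCommGroup Y]
    (C D : Set Y) (S : Y → Y) (φ : ℝ → ℝ) (d : ℝ)
    (hd0 : 0 ≤ d)
    (hφ : StrictMonoOn φ (Set.Ici 0))
    (hdist : ∀ c ∈ C, ∀ b ∈ D, d ≤ ‖c - b‖)
    (hSC : ∀ c ∈ C, S c ∈ D) (hSD : ∀ b ∈ D, S b ∈ C)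
    (hS : ∀ a ∈ C, ∀ b ∈ D, ‖S a - S b‖ ≤ ‖a - b‖ - φ ‖a - b‖ + φ d)
    (hconvC : ∀ ε > (0:ℝ), ∃ δ > (0:ℝ), ∀ p ∈ C, ∀ q ∈ C, ∀ r ∈ D,
      ‖p - r‖ ≤ d + δ → ‖q - r‖ ≤ d + δ → ‖p - q‖ ≤ ε)
    (u : ℕ → Y) (hu0 : u 0 ∈ C) (hu : ∀ n, u (n + 1) = S (u n)) :
    CauchySeq (fun n => u (2 * n)) := by
  have hφmono : ∀ s t : ℝ, 0 ≤ s → s ≤ t → φ s ≤ φ t := fun s t hs hst =>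
    hφ.monotoneOn hs (le_trans hs hst) hst
  -- memberships
  have hmem : ∀ n, u (2 * n) ∈ C ∧ u (2 * n + 1) ∈ D := by
    intro n
    induction n with
    | zero => exact ⟨hu0, by rw [hu]; exact hSC _ hu0⟩
    | succ k ih =>
      have h1 : u (2 * (k + 1)) ∈ C := by
        have h2 : 2 * (k + 1) = (2 * k + 1) + 1 := by ring
        rw [h2, hu]; exact hSD _ ih.2
      exact ⟨h1, by rw [hu]; exact hSC _ h1⟩
  -- general distance lower bound
  have hdist' : ∀ a b : Y, (a ∈ C ∧ b ∈ D) ∨ (a ∈ D ∧ b ∈ C) → d ≤ ‖a - b‖ := by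
    rintro a b (⟨ha, hb⟩ | ⟨ha, hb⟩)
    · exact hdist a ha b hb
    · rw [norm_sub_rev]; exact hdist b hb a ha
  -- symmetric contraction
  have hstep : ∀ a b : Y, (a ∈ C ∧ b ∈ D) ∨ (a ∈ D ∧ b ∈ C) →
      ‖S a - S b‖ ≤ ‖a - b‖ - φ ‖a - b‖ + φ d := by
    rintro a b (⟨ha, hb⟩ | ⟨ha, hb⟩)
    · exact hS a ha b hb
    · rw [norm_sub_rev, norm_sub_rev a b]; exact hS b hb a ha
  have hstep' : ∀ a b : Y, (a ∈ C ∧ b ∈ D) ∨ (a ∈ D ∧ b ∈ C) →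
      ‖S a - S b‖ ≤ ‖a - b‖ := by
    intro a b h
    have h1 := hstep a b h
    have h2 := hφmono d ‖a - b‖ hd0 (hdist' a b h)
    linarith
  -- parity membership
  have hpar : ∀ n, (u n ∈ C ∧ u (n + 1) ∈ D) ∨ (u n ∈ D ∧ u (n + 1) ∈ C) := by
    intro n
    rcases Nat.even_or_odd n with ⟨k, hk⟩ | ⟨k, hk⟩
    · left
      have hk' : n = 2 * k := by omega
      subst hk'
      exact ⟨(hmem k).1, (hmem k).2⟩
    · right
      have hk' : n = 2 * k + 1 := by omega
      subst hk'
      have h2 : 2 * k + 1 + 1 = 2 * (k + 1) := by ring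
      rw [h2]
      exact ⟨(hmem k).2, (hmem (k + 1)).1⟩
  set c : ℕ → ℝ := fun n => ‖u (n + 1) - u n‖ with hc
  have hpar' : ∀ n, (u (n+1) ∈ C ∧ u n ∈ D) ∨ (u (n+1) ∈ D ∧ u n ∈ C) := by
    intro n; rcases hpar n with ⟨h1, h2⟩ | ⟨h1, h2⟩
    · right; exact ⟨h2, h1⟩
    · left; exact ⟨h2, h1⟩
  have hcd : ∀ n, d ≤ c n := fun n => hdist' _ _ (hpar' n)
  have hcsucc : ∀ n, c (n + 1) ≤ c n - φ (c n) + φ d := by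
    intro n
    have h1 := hstep _ _ (hpar' n)
    simpa [hc, hu (n+1), hu n] using h1
  have hcanti : ∀ n, c (n + 1) ≤ c n := by
    intro n
    have h1 := hcsucc n
    have h2 := hφmono d (c n) hd0 (hcd n)
    linarith
  have hcantile : ∀ m n, m ≤ n → c n ≤ c m := by
    intro m n hmn
    induction n with
    | zero => rw [Nat.le_zero.mp hmn]
    | succ k ih =>
      rcases Nat.lt_or_ge m (k+1) with h | h
      · exact le_trans (hcanti k) (ih (by omega))
      · have : m = k + 1 := by omega
        subst this; rfl
  -- Step 1: c n eventually ≤ d + ε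
  have K1 : ∀ ε > (0:ℝ), ∃ N, ∀ n ≥ N, c n ≤ d + ε := by
    intro ε hε
    suffices h : ∃ N, c N ≤ d + ε by
      obtain ⟨N, hN⟩ := h
      exact ⟨N, fun n hn => le_trans (hcantile N n hn) hN⟩
    by_contra hcon
    push_neg at hcon
    set γ := φ (d + ε) - φ d with hγ
    have hγpos : 0 < γ := sub_pos.2 (hφ (Set.mem_Ici.2 hd0)
      (Set.mem_Ici.2 (by linarith)) (by linarith))
    have hdec : ∀ n, c n ≤ c 0 - n * γ := by
      intro n
      induction n with
      | zero => simp
      | succ k ih =>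
        have h1 := hcsucc k
        have h2 : φ (d + ε) ≤ φ (c k) :=
          hφmono (d + ε) (c k) (by linarith) (hcon k).le
        push_cast
        have := hcon k
        nlinarith
    obtain ⟨n, hn⟩ := exists_nat_gt ((c 0 - d) / γ)
    have h1 := hdec n
    have h2 := hcd n
    rw [div_lt_iff₀ hγpos] at hn
    linarith
  -- Step 2a: consecutive even terms get close
  have K2C : ∀ ε > (0:ℝ), ∃ N, ∀ n ≥ N, ‖u (2 * n + 2) - u (2 * n)‖ ≤ ε := by
    intro ε hε
    obtain ⟨δ, hδ, hcv⟩ := hconvC ε hε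
    obtain ⟨N, hN⟩ := K1 δ hδ
    refine ⟨N, fun n hn => ?_⟩
    have hm1 : u (2 * n + 2) ∈ C := by
      have h2 : 2 * n + 2 = 2 * (n + 1) := by ring
      rw [h2]; exact (hmem (n+1)).1
    have h1 : ‖u (2 * n + 2) - u (2 * n + 1)‖ ≤ d + δ := hN (2 * n + 1) (by omega)
    have h2 : ‖u (2 * n) - u (2 * n + 1)‖ ≤ d + δ := by
      rw [norm_sub_rev]; exact hN (2 * n) (by omega)
    exact hcv _ hm1 _ (hmem n).1 _ (hmem n).2 h1 h2
  -- main claim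
  have main : ∀ ε > (0:ℝ), ∃ N, ∀ n m, N ≤ n → n ≤ m →
      ‖u (2 * n) - u (2 * m + 1)‖ ≤ d + ε := by
    intro ε hε
    set γ := φ (d + ε) - φ d with hγ
    have hγpos : 0 < γ := sub_pos.2 (hφ (Set.mem_Ici.2 hd0)
      (Set.mem_Ici.2 (by linarith)) (by linarith))
    obtain ⟨N₁, hN₁⟩ := K1 ε hε
    obtain ⟨N₂, hN₂⟩ := K2C γ hγpos
    set N := max N₁ N₂ with hN
    -- key contract step: for k + 1 ≤ ?, m:
    have key : ∀ k m, k ≤ m →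
        ‖u (2 * (k+1)) - u (2 * (m+1) + 1)‖ ≤
          ‖u (2 * k) - u (2 * m + 1)‖
          - φ ‖u (2 * k) - u (2 * m + 1)‖ + φ d := by
      intro k m hkm
      have e1 : 2 * (k + 1) = (2 * k + 1) + 1 := by ring
      have e2 : 2 * (m + 1) + 1 = (2 * m + 2) + 1 := by ring
      have h1 : ‖u (2 * (k+1)) - u (2 * (m+1) + 1)‖
          ≤ ‖u (2 * k + 1) - u (2 * m + 2)‖ := by
        rw [e1, e2, hu (2 * k + 1), hu (2 * m + 2)]
        refine hstep' _ _ (Or.inr ⟨(hmem k).2, ?_⟩)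
        have e : 2 * m + 2 = 2 * (m + 1) := by ring
        rw [e]; exact (hmem (m+1)).1
      have h2 : ‖u (2 * k + 1) - u (2 * m + 2)‖ ≤
          ‖u (2 * k) - u (2 * m + 1)‖
          - φ ‖u (2 * k) - u (2 * m + 1)‖ + φ d := by
        have e3 : 2 * k + 1 = (2 * k) + 1 := rfl
        have e4 : 2 * m + 2 = (2 * m + 1) + 1 := rfl
        rw [e3, e4, hu (2 * k), hu (2 * m + 1)]
        exact hstep _ _ (Or.inl ⟨(hmem k).1, (hmem m).2⟩)
      exact le_trans h1 h2
    have keyP : ∀ k m, k ≤ m →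
        (d + ε ≤ ‖u (2 * k) - u (2 * m + 1)‖ →
          ‖u (2 * (k+1)) - u (2 * (m+1) + 1)‖ ≤ ‖u (2 * k) - u (2 * m + 1)‖ - γ)
        ∧ ‖u (2 * (k+1)) - u (2 * (m+1) + 1)‖ ≤ ‖u (2 * k) - u (2 * m + 1)‖ := by
      intro k m hkm
      have h1 := key k m hkm
      have hge : d ≤ ‖u (2 * k) - u (2 * m + 1)‖ :=
        hdist' _ _ (Or.inl ⟨(hmem k).1, (hmem m).2⟩)
      constructor
      · intro h2
        have h3 : φ (d + ε) ≤ φ ‖u (2 * k) - u (2 * m + 1)‖ :=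
          hφmono _ _ (by linarith) h2
        linarith
      · have h3 : φ d ≤ φ ‖u (2 * k) - u (2 * m + 1)‖ := hφmono _ _ hd0 hge
        linarith
    -- P m : ∀ n ∈ [N+1, m], ‖u (2n) - u(2m+1)‖ ≤ d + ε
    have P : ∀ m, ∀ n, N + 1 ≤ n → n ≤ m → ‖u (2 * n) - u (2 * m + 1)‖ ≤ d + ε := by
      intro m
      induction m with
      | zero => intro n h1 h2; omega
      | succ m ih =>
        intro n h1 h2
        rcases Nat.lt_or_ge n (m + 1) with hlt | hge
        · -- n ≤ m, use recurrence from (n-1, m)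
          obtain ⟨k, rfl⟩ : ∃ k, n = k + 1 := ⟨n - 1, by omega⟩
          have hkm : k ≤ m := by omega
          have hbound : ‖u (2 * k) - u (2 * m + 1)‖ ≤ d + ε + γ := by
            rcases Nat.lt_or_ge N k with hNk | hNk
            · -- k ≥ N+1 : by ih
              have := ih k (by omega) (by omega)
              linarith
            · -- k = N
              have hk2 : N₂ ≤ k := by
                have hx := le_max_right N₁ N₂
                omega
              have htri : ‖u (2 * k) - u (2 * m + 1)‖ ≤
                  ‖u (2 * k + 2) - u (2 * k)‖ + ‖u (2 * (k+1)) - u (2 * m + 1)‖ := by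
                have e : 2 * (k + 1) = 2 * k + 2 := by ring
                rw [e]
                calc ‖u (2 * k) - u (2 * m + 1)‖
                    ≤ ‖u (2 * k) - u (2 * k + 2)‖ + ‖u (2 * k + 2) - u (2 * m + 1)‖ :=
                      norm_sub_le_norm_sub_add_norm_sub _ _ _
                  _ = ‖u (2 * k + 2) - u (2 * k)‖ + ‖u (2 * k + 2) - u (2 * m + 1)‖ := by
                      rw [norm_sub_rev (u (2*k))]
              have hK2 : ‖u (2 * k + 2) - u (2 * k)‖ ≤ γ := hN₂ k hk2
              have hih : ‖u (2 * (k+1)) - u (2 * m + 1)‖ ≤ d + ε := ih (k+1) (by omega) (by omega)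
              linarith
          rcases le_or_gt (d + ε) ‖u (2 * k) - u (2 * m + 1)‖ with hcase | hcase
          · have := (keyP k m hkm).1 hcase
            linarith
          · have := (keyP k m hkm).2
            linarith
        · -- n = m + 1 : consecutive
          have hn : n = m + 1 := by omega
          subst hn
          have : ‖u (2 * (m+1)) - u (2 * (m+1) + 1)‖ = c (2 * (m+1)) := by
            rw [hc]; rw [norm_sub_rev]
          rw [this]
          exact hN₁ _ (by omega)
    exact ⟨N + 1, fun n m h1 h2 => P m n h1 h2⟩
  -- conclude Cauchy
  rw [Metric.cauchySeq_iff]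
  intro ε₀ hε₀
  obtain ⟨δ, hδ, hcv⟩ := hconvC (ε₀ / 2) (by positivity)
  obtain ⟨N₁, hN₁⟩ := K1 δ hδ
  obtain ⟨N₂, hN₂⟩ := main δ hδ
  refine ⟨max N₁ N₂, fun m hm n hn => ?_⟩
  -- wlog n ≤ m
  have hmain : ∀ a b : ℕ, max N₁ N₂ ≤ a → max N₁ N₂ ≤ b → a ≤ b →
      dist (u (2 * a)) (u (2 * b)) < ε₀ := by
    intro a b ha hb hab
    rw [dist_eq_norm]
    have h1 : ‖u (2 * a) - u (2 * b + 1)‖ ≤ d + δ :=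
      hN₂ a b (le_trans (le_max_right _ _) ha) hab
    have h2 : ‖u (2 * b) - u (2 * b + 1)‖ ≤ d + δ := by
      rw [norm_sub_rev]
      exact hN₁ (2 * b) (by calc N₁ ≤ max N₁ N₂ := le_max_left _ _
        _ ≤ b := hb
        _ ≤ 2 * b := by omega)
    have := hcv _ (hmem a).1 _ (hmem b).1 _ (hmem b).2 h1 h2
    calc ‖u (2 * a) - u (2 * b)‖ ≤ ε₀ / 2 := this
      _ < ε₀ := by linarith
  rcases le_or_gt m n with h | h
  · exact hmain m n hm hn h
  · rw [dist_comm]; exact hmain n m hn hm h.le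



/-- `setDist A B = inf {‖a - b‖ : a ∈ A, b ∈ B}`. -/
noncomputable def setDist {X : Type*} [NormedAddCommGroup X] (A B : Set X) : ℝ :=
  sInf {d : ℝ | ∃ a ∈ A, ∃ b ∈ B, d = ‖a - b‖}


lemma prod_norm_mk {X : Type*} [NormedAddCommGroup X] (u v : X) :
    ‖((u, v) : X × X)‖ = max ‖u‖ ‖v‖ := rfl

lemma prod_sub_mk {X : Type*} [NormedAddCommGroup X] (a b c e : X) :
    ((a, b) : X × X) - (c, e) = (a - c, b - e) := rfl

theorem stmt8 {X : Type*} [NormedAddCommGroup X] [NormedSpace ℝ X] [UniformConvexSpace X] [CompleteSpace X]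
    (A B : Set X) (hA : A.Nonempty) (hB : B.Nonempty)
    (T : X → X → X) (φ : ℝ → ℝ)
    (hφmono : StrictMonoOn φ (Set.Ici 0)) (hφpos : ∀ t ≥ (0:ℝ), 0 ≤ φ t)
    (hTB : ∀ x ∈ A, ∀ y ∈ B, T x y ∈ B)
    (hTA : ∀ x ∈ B, ∀ y ∈ A, T x y ∈ A)
    (hT : ∀ x₁ ∈ A, ∀ y₁ ∈ B, ∀ x₂ ∈ B, ∀ y₂ ∈ A,
      ‖T x₁ y₁ - T x₂ y₂‖ ≤ ‖((x₁, y₁) : X × X) - (x₂, y₂)‖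
        - φ ‖((x₁, y₁) : X × X) - (x₂, y₂)‖ + φ (setDist A B))
    (hAcl : IsClosed A) (hBcl : IsClosed B) (hAconv : Convex ℝ A) (hBconv : Convex ℝ B)
    (x y : ℕ → X) (hx0 : x 0 ∈ A) (hy0 : y 0 ∈ B)
    (hx : ∀ n, x (n + 1) = T (x n) (y n))
    (hy : ∀ n, y (n + 1) = T (y n) (x n)) :
    CauchySeq (fun n : ℕ => ((x (2 * n), y (2 * n)) : X × X)) ∧
      CauchySeq (fun n : ℕ => ((x (2 * n + 1), y (2 * n + 1)) : X × X)) := by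
  set d := setDist A B with hd
  -- basic facts on d
  have hdistXY : ∀ a ∈ A, ∀ b ∈ B, d ≤ ‖a - b‖ := by
    intro a ha b hb
    refine csInf_le ⟨0, ?_⟩ ⟨a, ha, b, hb, rfl⟩
    rintro r ⟨a', _, b', _, rfl⟩
    exact norm_nonneg _
  have hd0 : 0 ≤ d := by
    refine Real.sInf_nonneg ?_
    rintro r ⟨a', _, b', _, rfl⟩
    exact norm_nonneg _
  have hdistYX : ∀ b ∈ B, ∀ a ∈ A, d ≤ ‖b - a‖ := by
    intro b hb a ha
    rw [norm_sub_rev]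
    exact hdistXY a ha b hb
  -- product setup
  set C : Set (X × X) := A ×ˢ B with hC
  set D : Set (X × X) := B ×ˢ A with hD
  set S : X × X → X × X := fun p => (T p.1 p.2, T p.2 p.1) with hSdef
  set u : ℕ → X × X := fun n => (x n, y n) with hudef
  have hu0 : u 0 ∈ C := ⟨hx0, hy0⟩
  have hu : ∀ n, u (n + 1) = S (u n) := by
    intro n
    simp only [hudef, hSdef, hx n, hy n]
  have hSC : ∀ p ∈ C, S p ∈ D := by
    rintro ⟨a, b⟩ ⟨ha, hb⟩
    exact ⟨hTB a ha b hb, hTA b hb a ha⟩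
  have hSD : ∀ p ∈ D, S p ∈ C := by
    rintro ⟨b, a⟩ ⟨hb, ha⟩
    exact ⟨hTA b hb a ha, hTB a ha b hb⟩
  have hdistP : ∀ p ∈ C, ∀ q ∈ D, d ≤ ‖p - q‖ := by
    rintro ⟨a, b⟩ ⟨ha, hb⟩ ⟨b', a'⟩ ⟨hb', ha'⟩
    rw [prod_sub_mk, prod_norm_mk]
    exact le_trans (hdistXY a ha b' hb') (le_max_left _ _)
  have hdistP' : ∀ p ∈ D, ∀ q ∈ C, d ≤ ‖p - q‖ := by
    intro p hp q hq
    rw [norm_sub_rev]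
    exact hdistP q hq p hp
  -- product contraction
  have hSP : ∀ p ∈ C, ∀ q ∈ D, ‖S p - S q‖ ≤ ‖p - q‖ - φ ‖p - q‖ + φ d := by
    rintro ⟨a, b⟩ ⟨ha, hb⟩ ⟨b', a'⟩ ⟨hb', ha'⟩
    have e1 : S (a, b) - S (b', a') = (T a b - T b' a', T b a - T a' b') := rfl
    rw [e1, prod_norm_mk, prod_sub_mk, prod_norm_mk]
    refine max_le ?_ ?_
    · have h := hT a ha b hb b' hb' a' ha'
      rwa [prod_sub_mk, prod_norm_mk] at h
    · have h1 := hT a' ha' b' hb' b hb a ha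
      rw [prod_sub_mk, prod_norm_mk, norm_sub_rev a' b, norm_sub_rev b' a,
        max_comm ‖b - a'‖ ‖a - b'‖] at h1
      rw [norm_sub_rev]
      exact h1
  have hSP' : ∀ p ∈ D, ∀ q ∈ C, ‖S p - S q‖ ≤ ‖p - q‖ - φ ‖p - q‖ + φ d := by
    intro p hp q hq
    rw [norm_sub_rev, norm_sub_rev p q]
    exact hSP q hq p hp
  -- product convexity lemmas
  have hconvCP : ∀ ε > (0:ℝ), ∃ δ > (0:ℝ), ∀ p ∈ C, ∀ q ∈ C, ∀ r ∈ D,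
      ‖p - r‖ ≤ d + δ → ‖q - r‖ ≤ d + δ → ‖p - q‖ ≤ ε := by
    intro ε hε
    obtain ⟨δA, hδA, hA'⟩ := conv_lemma A B hAconv d hd0 hdistXY hε
    obtain ⟨δB, hδB, hB'⟩ := conv_lemma B A hBconv d hd0 hdistYX hε
    refine ⟨min δA δB, lt_min hδA hδB, ?_⟩
    rintro ⟨p1, p2⟩ ⟨hp1, hp2⟩ ⟨q1, q2⟩ ⟨hq1, hq2⟩ ⟨r1, r2⟩ ⟨hr1, hr2⟩ h1 h2
    rw [prod_sub_mk, prod_norm_mk] at h1 h2 ⊢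
    refine max_le ?_ ?_
    · refine hA' p1 hp1 q1 hq1 r1 hr1 ?_ ?_
      · calc ‖p1 - r1‖ ≤ d + min δA δB := le_trans (le_max_left _ _) h1
          _ ≤ d + δA := by gcongr; exact min_le_left _ _
      · calc ‖q1 - r1‖ ≤ d + min δA δB := le_trans (le_max_left _ _) h2
          _ ≤ d + δA := by gcongr; exact min_le_left _ _
    · refine hB' p2 hp2 q2 hq2 r2 hr2 ?_ ?_
      · calc ‖p2 - r2‖ ≤ d + min δA δB := le_trans (le_max_right _ _) h1
          _ ≤ d + δB := by gcongr; exact min_le_right _ _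
      · calc ‖q2 - r2‖ ≤ d + min δA δB := le_trans (le_max_right _ _) h2
          _ ≤ d + δB := by gcongr; exact min_le_right _ _
  have hconvDP : ∀ ε > (0:ℝ), ∃ δ > (0:ℝ), ∀ p ∈ D, ∀ q ∈ D, ∀ r ∈ C,
      ‖p - r‖ ≤ d + δ → ‖q - r‖ ≤ d + δ → ‖p - q‖ ≤ ε := by
    intro ε hε
    obtain ⟨δA, hδA, hA'⟩ := conv_lemma A B hAconv d hd0 hdistXY hε
    obtain ⟨δB, hδB, hB'⟩ := conv_lemma B A hBconv d hd0 hdistYX hε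
    refine ⟨min δA δB, lt_min hδA hδB, ?_⟩
    rintro ⟨p1, p2⟩ ⟨hp1, hp2⟩ ⟨q1, q2⟩ ⟨hq1, hq2⟩ ⟨r1, r2⟩ ⟨hr1, hr2⟩ h1 h2
    rw [prod_sub_mk, prod_norm_mk] at h1 h2 ⊢
    refine max_le ?_ ?_
    · refine hB' p1 hp1 q1 hq1 r1 hr1 ?_ ?_
      · calc ‖p1 - r1‖ ≤ d + min δA δB := le_trans (le_max_left _ _) h1
          _ ≤ d + δB := by gcongr; exact min_le_right _ _
      · calc ‖q1 - r1‖ ≤ d + min δA δB := le_trans (le_max_left _ _) h2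
          _ ≤ d + δB := by gcongr; exact min_le_right _ _
    · refine hA' p2 hp2 q2 hq2 r2 hr2 ?_ ?_
      · calc ‖p2 - r2‖ ≤ d + min δA δB := le_trans (le_max_right _ _) h1
          _ ≤ d + δA := by gcongr; exact min_le_left _ _
      · calc ‖q2 - r2‖ ≤ d + min δA δB := le_trans (le_max_right _ _) h2
          _ ≤ d + δA := by gcongr; exact min_le_left _ _
  constructor
  · exact abstract_cauchy C D S φ d hd0 hφmono hdistP hSC hSD hSP hconvCP u hu0 hu
  · have hu1 : u 1 ∈ D := by rw [hu 0]; exact hSC _ hu0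
    have := abstract_cauchy D C S φ d hd0 hφmono hdistP' hSD hSC hSP' hconvDP
      (fun n => u (n + 1)) hu1 (fun n => hu (n + 1))
    exact this
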